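/- The Droop-quota analog of utility rounding fails for n = 3, k = 1: with candidate types {1,2}, {1,3}, {2,3} each of supply 1, the integer utility vector (1,1,1) is achievable by a fractional committee of total size strictly less than k+1 = 2 (take x_R = 1/2 for each type, total size 3/2), but no integral committee of size at most k = 1 gives every voter utility at least 1. -/
import Mathlib

/-- Approvers of the three candidate types in the Droop-quota example:
type 0 is `{1,2}`, type 1 is `{1,3}`, type 2 is `{2,3}` (0-indexed). -/
def droopApp : Fin 3 → Finset (Fin 3) := ![{0, 1}, {0, 2}, {1, 2}]

/-- The Droop-quota analog of utility rounding fails for `n = 3`, `k = 1`: the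
utility vector `(1,1,1)` is achievable by a fractional committee of total size
strictly less than `k + 1 = 2` (with each `x_R ≤ 1`), but no integral committee
of size at most `k = 1` gives every voter utility at least 1. -/
theorem stmt19 :
    (∃ x : Fin 3 → ℝ, (∀ R, 0 ≤ x R ∧ x R ≤ 1) ∧
      (∑ R, x R) < 2 ∧
      (∀ i : Fin 3, (1 : ℝ) ≤ ∑ R, if i ∈ droopApp R then x R else 0)) ∧
    ¬ ∃ x : Fin 3 → ℕ, (∀ R, x R ≤ 1) ∧ (∑ R, x R) ≤ 1 ∧
        (∀ i : Fin 3, (1 : ℤ) ≤ ∑ R, if i ∈ droopApp R then (x R : ℤ) else 0) := by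
  constructor
  · refine ⟨fun _ => 1/2, fun R => by norm_num, ?_, ?_⟩
    · simp [Fin.sum_univ_three]; norm_num
    · intro i
      fin_cases i <;> simp [Fin.sum_univ_three, droopApp] <;> norm_num
  · rintro ⟨x, _, hs, hu⟩
    have h0 := hu 0
    have h1 := hu 1
    have h2 := hu 2
    simp [Fin.sum_univ_three, droopApp] at h0 h1 h2
    simp [Fin.sum_univ_three] at hs
    omega
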